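/- (Schur majorization, minimal form) Let A be an n × n Hermitian matrix with eigenvalues λ₁ ≤ λ₂ ≤ ⋯ ≤ λₙ, and let 1 ≤ q ≤ n. Then for any q distinct indices i₁ < i₂ < ⋯ < i_q, the sum of the corresponding diagonal entries satisfies A_{i₁i₁} + ⋯ + A_{i_q i_q} ≥ λ₁ + λ₂ + ⋯ + λ_q. -/

import Mathlib

open Finset

lemma key_weight {n q : ℕ} (hq : q ≤ n) (μ : Fin n → ℝ) (hmono : Monotone μ)
    (w : Fin n → ℝ) (h0 : ∀ k, 0 ≤ w k) (h1 : ∀ k, w k ≤ 1) (hsum : ∑ k, w k = q) :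
    ∑ s : Fin q, μ (Fin.castLE hq s) ≤ ∑ k, μ k * w k := by
  classical
  set T : Finset (Fin n) := Finset.univ.filter (fun k => (k : ℕ) < q) with hT
  have himg : T = Finset.image (Fin.castLE hq) Finset.univ := by
    ext k
    simp only [hT, Finset.mem_filter, Finset.mem_univ, true_and, Finset.mem_image]
    constructor
    · intro h; exact ⟨⟨k.val, h⟩, rfl⟩
    · rintro ⟨s, rfl⟩; exact s.isLt
  have hinj : Function.Injective (Fin.castLE hq) := Fin.castLE_injective hq
  have hsumT : ∑ s : Fin q, μ (Fin.castLE hq s) = ∑ k ∈ T, μ k := by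
    rw [himg, Finset.sum_image (fun a _ b _ h => hinj h)]
  have hcard : T.card = q := by
    rw [himg, Finset.card_image_of_injective _ hinj, Finset.card_univ, Fintype.card_fin]
  rcases Nat.eq_zero_or_pos q with hq0 | hqpos
  · subst hq0
    have : ∀ k ∈ Finset.univ, w k = 0 := by
      intro k _
      have := (Finset.sum_eq_zero_iff_of_nonneg (fun k _ => h0 k)).mp (by simpa using hsum)
      exact this k (Finset.mem_univ k)
    have hz : ∀ k, w k = (0:ℝ) := fun k => this k (Finset.mem_univ k)
    simp [hz]
  · set c := μ ⟨q - 1, by omega⟩ with hc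
    have hcT : ∀ k ∈ T, μ k ≤ c := by
      intro k hk
      simp only [hT, Finset.mem_filter] at hk
      exact hmono (by simp [Fin.le_def]; omega)
    have hcT' : ∀ k ∈ Tᶜ, c ≤ μ k := by
      intro k hk
      simp only [hT, Finset.mem_compl, Finset.mem_filter, Finset.mem_univ, true_and,
        not_lt] at hk
      exact hmono (by simp [Fin.le_def]; omega)
    have b1 : ∑ k ∈ T, (μ k - c) ≤ ∑ k ∈ T, (μ k - c) * w k := by
      apply Finset.sum_le_sum
      intro k hk
      nlinarith [h0 k, h1 k, hcT k hk]
    have b2 : (0:ℝ) ≤ ∑ k ∈ Tᶜ, (μ k - c) * w k := by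
      apply Finset.sum_nonneg
      intro k hk
      exact mul_nonneg (by linarith [hcT' k hk]) (h0 k)
    have e1 : ∑ k, (μ k - c) * w k = ∑ k, μ k * w k - c * q := by
      rw [← hsum]
      rw [Finset.mul_sum, ← Finset.sum_sub_distrib]
      apply Finset.sum_congr rfl; intro k _; ring
    have e2 : ∑ k ∈ T, (μ k - c) = ∑ k ∈ T, μ k - c * q := by
      rw [Finset.sum_sub_distrib, Finset.sum_const, hcard, nsmul_eq_mul]
      ring
    have esplit : ∑ k, (μ k - c) * w k
        = ∑ k ∈ T, (μ k - c) * w k + ∑ k ∈ Tᶜ, (μ k - c) * w k :=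
      (Finset.sum_add_sum_compl T _).symm
    rw [hsumT]
    linarith

theorem stmt3 {n q : ℕ} (hq : q ≤ n) (A : Matrix (Fin n) (Fin n) ℂ) (hA : A.IsHermitian)
    (μ : Fin n → ℝ) (hmono : Monotone μ)
    (hperm : ∃ σ : Equiv.Perm (Fin n), μ = hA.eigenvalues ∘ σ)
    (i : Fin q → Fin n) (hi : StrictMono i) :
    ∑ s : Fin q, μ (Fin.castLE hq s) ≤ ∑ s : Fin q, (A (i s) (i s)).re := by
  classical
  obtain ⟨σ, hσ⟩ := hperm
  set U : Matrix (Fin n) (Fin n) ℂ := (hA.eigenvectorUnitary : Matrix (Fin n) (Fin n) ℂ)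
    with hU
  -- diagonal entry formula
  have hdiag : ∀ j, (A j j).re = ∑ k, hA.eigenvalues k * Complex.normSq (U j k) := by
    intro j
    conv_lhs => rw [hA.spectral_theorem, Unitary.conjStarAlgAut_apply]
    rw [Matrix.mul_apply, Complex.re_sum]
    apply Finset.sum_congr rfl
    intro k _
    simp only [Matrix.mul_diagonal, Matrix.star_apply, Function.comp_apply, RCLike.star_def]
    rw [mul_right_comm, Complex.mul_conj]
    simp only [hU, Matrix.IsHermitian.eigenvectorUnitary_apply]
    simp [mul_comm]
  -- unitary facts
  have hUU : U * star U = 1 := (Matrix.mem_unitaryGroup_iff).mp hA.eigenvectorUnitary.2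
  have hUU' : star U * U = 1 := (Matrix.mem_unitaryGroup_iff').mp hA.eigenvectorUnitary.2
  have hrow : ∀ j, ∑ k, Complex.normSq (U j k) = 1 := by
    intro j
    have := congrFun (congrFun hUU j) j
    rw [Matrix.mul_apply] at this
    have := congrArg Complex.re this
    rw [Complex.re_sum] at this
    simpa [Matrix.star_apply, Complex.mul_conj] using this
  have hcol : ∀ k, ∑ j, Complex.normSq (U j k) = 1 := by
    intro k
    have := congrFun (congrFun hUU' k) k
    rw [Matrix.mul_apply] at this
    have := congrArg Complex.re this
    rw [Complex.re_sum] at this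
    simpa [Matrix.star_apply, Complex.mul_conj, mul_comm] using this
  -- weights
  set t : Fin n → ℝ := fun k => ∑ s : Fin q, Complex.normSq (U (i s) k) with ht
  have ht0 : ∀ k, 0 ≤ t k := fun k =>
    Finset.sum_nonneg fun s _ => Complex.normSq_nonneg _
  have ht1 : ∀ k, t k ≤ 1 := by
    intro k
    have heq : t k = ∑ j ∈ Finset.image i Finset.univ, Complex.normSq (U j k) := by
      show ∑ s : Fin q, Complex.normSq (U (i s) k) = _
      rw [Finset.sum_image (fun a _ b _ h => hi.injective h)]
    rw [heq, ← hcol k]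
    exact Finset.sum_le_sum_of_subset_of_nonneg (Finset.subset_univ _)
      (fun j _ _ => Complex.normSq_nonneg _)
  have htsum : ∑ k, t k = q := by
    rw [ht]
    rw [Finset.sum_comm]
    simp [hrow]
  -- RHS rewriting
  have hrhs : ∑ s : Fin q, (A (i s) (i s)).re = ∑ k, μ k * t (σ k) := by
    calc ∑ s : Fin q, (A (i s) (i s)).re
        = ∑ s : Fin q, ∑ k, hA.eigenvalues k * Complex.normSq (U (i s) k) := by
          exact Finset.sum_congr rfl fun s _ => hdiag (i s)
      _ = ∑ k, hA.eigenvalues k * t k := by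
          rw [Finset.sum_comm]
          exact Finset.sum_congr rfl fun k _ => by rw [ht, Finset.mul_sum]
      _ = ∑ k, hA.eigenvalues (σ k) * t (σ k) :=
          (Equiv.sum_comp σ (fun k => hA.eigenvalues k * t k)).symm
      _ = ∑ k, μ k * t (σ k) := by
          exact Finset.sum_congr rfl fun k _ => by rw [hσ]; rfl
  rw [hrhs]
  exact key_weight hq μ hmono (fun k => t (σ k)) (fun k => ht0 _) (fun k => ht1 _)
    (by rw [Equiv.sum_comp σ t, htsum])
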